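/- Let p be a real polynomial, σ ∈ ℝ, and λ ∈ ℝ with p(λ) ≠ 0, p_σ(λ) ≠ 0, p'(λ) ≠ 0, F[p](λ) = 0, and F[p_σ](λ) < 0. Then F'[p](λ)/(p(λ)·p_σ(λ)) < 0; in particular F'[p](λ) ≠ 0 and λ is a simple root of F[p]. -/

import Mathlib

open Polynomial

/-- `F[q] = q·q'' − (q')²`. -/
noncomputable def Fop (q : Polynomial ℝ) : Polynomial ℝ :=
  q * derivative (derivative q) - (derivative q) ^ 2

/-- The Laguerre (generalised) derivative `p_σ = p' + σ·p`. -/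
noncomputable def psig (σ : ℝ) (p : Polynomial ℝ) : Polynomial ℝ :=
  derivative p + C σ * p

theorem stmt16 (p : Polynomial ℝ) (σ lam : ℝ)
    (hp : p.eval lam ≠ 0) (hps : (psig σ p).eval lam ≠ 0)
    (hp' : (derivative p).eval lam ≠ 0)
    (hF : (Fop p).eval lam = 0)
    (hneg : (Fop (psig σ p)).eval lam < 0) :
    (derivative (Fop p)).eval lam / (p.eval lam * (psig σ p).eval lam) < 0 ∧
      (derivative (Fop p)).eval lam ≠ 0 := by
  set a := p.eval lam with ha
  set b := (derivative p).eval lam with hb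
  set c := (derivative (derivative p)).eval lam with hc
  set d := (derivative (derivative (derivative p))).eval lam with hd
  have hF' : a * c - b ^ 2 = 0 := by
    simpa [Fop] using hF
  have hs : (psig σ p).eval lam = b + σ * a := by
    simp [psig]; rfl
  have hderiv : (derivative (Fop p)).eval lam = b * c + a * d - 2 * b * c := by
    simp [Fop, derivative_mul, derivative_pow, mul_comm]; rfl
  have hFs : (Fop (psig σ p)).eval lam
      = (b + σ * a) * (d + σ * c) - (c + σ * b) ^ 2 := by
    simp [Fop, psig, derivative_add, derivative_mul]; rfl
  have key : (derivative (Fop p)).eval lam / (a * (b + σ * a))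
      = (Fop (psig σ p)).eval lam / (b + σ * a) ^ 2 := by
    rw [hderiv, hFs]
    have hsne : b + σ * a ≠ 0 := by rw [← hs]; exact hps
    rw [div_eq_div_iff (mul_ne_zero hp hsne) (pow_ne_zero 2 hsne)]
    linear_combination ((b + σ * a) * (c - σ ^ 2 * a)) * hF'
  rw [hs]
  have hsne : b + σ * a ≠ 0 := by rw [← hs]; exact hps
  have hlt : (derivative (Fop p)).eval lam / (a * (b + σ * a)) < 0 := by
    rw [key]
    exact div_neg_of_neg_of_pos hneg (by positivity)
  refine ⟨hlt, ?_⟩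
  intro h0
  rw [h0, zero_div] at hlt
  exact lt_irrefl 0 hlt
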